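/- Let v be a weight function satisfying the doubling condition with constant D, let g(x)=v(1-1/x), let A > 1, and define integers b_k by b_0 = 1 and b_{k+1} = min{ l ∈ ℕ : g(2^l) > A g(2^{b_k}) }. Let u(z) = Re ∑_{k=0}^∞ g(2^{b_k}) z^{2^{b_k}}. Then for every r ∈ [1/2, 1), ∫_0^{2π} |u(re^{iφ})|² dφ ≥ π v(r)² / (16 A² D²), and consequently there exists c > 0 such that ∫_0^{2π} |u(re^{iφ})| dφ ≥ c v(r) for all r ∈ [1/2, 1). -/

import Mathlib

open Real intervalIntegral

lemma aux_int_cos (c : ℝ) (hc : c ≠ 0) :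
    ∫ φ in (0:ℝ)..(2*π), Real.cos (c*φ) = Real.sin (c*(2*π)) / c := by
  rw [integral_comp_mul_left (fun x => Real.cos x) hc]
  simp [integral_cos, smul_eq_mul, div_eq_inv_mul]

lemma aux_int_cos_int (m : ℤ) (hm : m ≠ 0) :
    ∫ φ in (0:ℝ)..(2*π), Real.cos ((m:ℝ)*φ) = 0 := by
  rw [aux_int_cos _ (by exact_mod_cast hm)]
  have : (m:ℝ) * (2*π) = (2*m : ℤ) * π := by push_cast; ring
  rw [this, Real.sin_int_mul_pi, zero_div]

lemma aux_orth (n m : ℕ) (hn : n ≠ 0) (hm : m ≠ 0) :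
    ∫ φ in (0:ℝ)..(2*π), Real.cos (n*φ) * Real.cos (m*φ)
      = if n = m then π else 0 := by
  have hprod : ∀ φ : ℝ, Real.cos (n*φ) * Real.cos (m*φ)
      = (Real.cos ((n - m : ℝ)*φ) + Real.cos ((n + m : ℝ)*φ)) / 2 := by
    intro φ
    rw [sub_mul, add_mul, Real.cos_sub, Real.cos_add]
    ring
  simp_rw [hprod]
  have hint : ∀ c : ℝ, IntervalIntegrable (fun φ => Real.cos (c*φ)) MeasureTheory.volume 0 (2*π) :=
    fun c => (Real.continuous_cos.comp (continuous_const.mul continuous_id)).intervalIntegrable _ _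
  rw [intervalIntegral.integral_div, intervalIntegral.integral_add (hint _) (hint _)]
  by_cases h : n = m
  · subst h
    have h1 : ((n:ℝ) - n) = 0 := by ring
    have h2 : ∫ φ in (0:ℝ)..(2*π), Real.cos (((n:ℝ) - n)*φ) = 2*π := by
      simp [h1]
    have h3 : ∫ φ in (0:ℝ)..(2*π), Real.cos (((n:ℝ) + n)*φ) = 0 := by
      have : ((n:ℝ) + n) = ((n + n : ℤ) : ℝ) := by push_cast; ring
      rw [this, aux_int_cos_int _ (by exact_mod_cast (by omega : n + n ≠ 0))]
    rw [h2, h3]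
    simp
  · have h2 : ∫ φ in (0:ℝ)..(2*π), Real.cos (((n:ℝ) - m)*φ) = 0 := by
      have : ((n:ℝ) - m) = (((n:ℤ) - m : ℤ) : ℝ) := by push_cast; ring
      rw [this, aux_int_cos_int _ (by omega)]
    have h3 : ∫ φ in (0:ℝ)..(2*π), Real.cos (((n:ℝ) + m)*φ) = 0 := by
      have : ((n:ℝ) + m) = (((n:ℤ) + m : ℤ) : ℝ) := by push_cast; ring
      rw [this, aux_int_cos_int _ (by omega)]
    rw [h2, h3]
    simp [h]

-- 4^{-x} ≤ 1 - x for x ∈ [0, 1/2]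
lemma aux_exp_bound {x : ℝ} (hx0 : 0 ≤ x) (hx : x ≤ 1/2) :
    Real.exp (-(Real.log 4) * x) ≤ 1 - x := by
  have h4 : Real.log 4 = 2 * Real.log 2 := by
    rw [show (4:ℝ) = 2^2 by norm_num, Real.log_pow]; push_cast; ring
  set s : ℝ := 2 * x with hs
  have hs0 : 0 ≤ s := by positivity
  have hs1 : s ≤ 1 := by simp [hs]; linarith
  have key := convexOn_exp.2 (Set.mem_univ (0:ℝ)) (Set.mem_univ (-Real.log 2))
    (by linarith : (0:ℝ) ≤ 1 - s) hs0 (by ring)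
  simp only [smul_eq_mul, mul_zero, zero_add, Real.exp_zero] at key
  rw [Real.exp_neg, Real.exp_log (by norm_num : (0:ℝ) < 2)] at key
  calc Real.exp (-(Real.log 4) * x) = Real.exp (s * -Real.log 2) := by
        rw [h4, hs]; ring_nf
    _ ≤ (1-s) * 1 + s * (2:ℝ)⁻¹ := key
    _ = 1 - x := by rw [hs]; ring

lemma aux_pow_quarter {r : ℝ} (hr : 1/2 ≤ r) (hr1 : r < 1) {n : ℕ}
    (hn : (n:ℝ) ≤ 1/(1-r)) : (1/4 : ℝ) ≤ r ^ n := by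
  set x := 1 - r with hxd
  have hx0 : 0 < x := by simp [hxd]; linarith
  have hx2 : x ≤ 1/2 := by simp [hxd]; linarith
  have hnx : (n:ℝ) * x ≤ 1 := by
    have h1 : (n:ℝ) ≤ 1/x := by simpa [hxd] using hn
    calc (n:ℝ) * x ≤ (1/x) * x := mul_le_mul_of_nonneg_right h1 hx0.le
      _ = 1 := by field_simp
  have hb : Real.exp (-(Real.log 4) * x) ≤ r := by
    have := aux_exp_bound hx0.le hx2
    linarith [this]
  have h1 : Real.exp (-(Real.log 4) * x) ^ n ≤ r ^ n :=
    pow_le_pow_left₀ (Real.exp_nonneg _) hb n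
  refine le_trans ?_ h1
  rw [← Real.exp_nat_mul]
  have : Real.exp ((n:ℝ) * (-(Real.log 4) * x)) = Real.exp (-(Real.log 4) * ((n:ℝ)*x)) := by
    ring_nf
  rw [this]
  have hlog4 : 0 < Real.log 4 := Real.log_pos (by norm_num)
  have : Real.exp (-(Real.log 4)) ≤ Real.exp (-(Real.log 4) * ((n:ℝ)*x)) := by
    apply Real.exp_le_exp.2
    nlinarith
  refine le_trans ?_ this
  rw [Real.exp_neg, Real.exp_log (by norm_num : (0:ℝ) < 4)]
  norm_num

set_option maxHeartbeats 1000000 in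
theorem stmt_17
    (v : ℝ → ℝ)
    (hv_pos : ∀ r ∈ Set.Ico (0:ℝ) 1, 0 < v r)
    (hv_mono : StrictMonoOn v (Set.Ico (0:ℝ) 1))
    (hv_cont : ContinuousOn v (Set.Ico (0:ℝ) 1))
    (hv_zero : v 0 = 1)
    (hv_top : Filter.Tendsto v (nhdsWithin 1 (Set.Iio (1:ℝ))) Filter.atTop)
    (D : ℝ) (hD : 1 < D)
    (hdbl : ∀ d ∈ Set.Ioc (0:ℝ) (1/2:ℝ), v (1 - d) ≤ D * v (1 - 2*d))
    (g : ℝ → ℝ) (hg : ∀ x, g x = v (1 - 1/x))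
    (A : ℝ) (hA : 1 < A)
    (b : ℕ → ℕ) (hb0 : b 0 = 1)
    (hbrec : ∀ k : ℕ, b (k+1) = sInf {l : ℕ | A * g ((2:ℝ) ^ (b k)) < g ((2:ℝ) ^ l)})
    (u : ℂ → ℝ)
    (hu : ∀ z ∈ Metric.ball (0:ℂ) 1,
      u z = (∑' k : ℕ, (g ((2:ℝ) ^ (b k)) : ℂ) * z ^ (2 ^ (b k))).re) :
    (∀ r ∈ Set.Ico (1/2 : ℝ) 1,
      Real.pi * (v r) ^ 2 / (16 * A ^ 2 * D ^ 2) ≤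
        ∫ φ in (0:ℝ)..(2 * Real.pi),
          (u ((r : ℂ) * Complex.exp (Complex.I * (φ : ℂ)))) ^ 2) ∧
    ∃ c > 0, ∀ r ∈ Set.Ico (1/2 : ℝ) 1,
      c * v r ≤
        ∫ φ in (0:ℝ)..(2 * Real.pi),
          |u ((r : ℂ) * Complex.exp (Complex.I * (φ : ℂ)))| := by
  -- basic facts about g on powers of 2
  have hgl : ∀ l : ℕ, g ((2:ℝ)^l) = v (1 - ((2:ℝ)^l)⁻¹) := by
    intro l; rw [hg]; norm_num
  have hmem : ∀ l : ℕ, (1 - ((2:ℝ)^l)⁻¹) ∈ Set.Ico (0:ℝ) 1 := by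
    intro l
    constructor
    · have : ((2:ℝ)^l)⁻¹ ≤ 1 := by
        rw [inv_le_one_iff₀]; right; exact one_le_pow₀ (by norm_num)
      linarith
    · have : (0:ℝ) < ((2:ℝ)^l)⁻¹ := by positivity
      linarith
  have hg_pos : ∀ l : ℕ, 0 < g ((2:ℝ)^l) := fun l => by
    rw [hgl]; exact hv_pos _ (hmem l)
  have hg_mono : ∀ {l l' : ℕ}, l < l' → g ((2:ℝ)^l) < g ((2:ℝ)^l') := by
    intro l l' h
    rw [hgl, hgl]
    apply hv_mono (hmem l) (hmem l')
    have : ((2:ℝ)^l')⁻¹ < ((2:ℝ)^l)⁻¹ := by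
      apply inv_strictAnti₀ (by positivity)
      exact pow_lt_pow_right₀ (by norm_num) h
    linarith
  have hg_le : ∀ {l l' : ℕ}, l ≤ l' → g ((2:ℝ)^l) ≤ g ((2:ℝ)^l') := by
    intro l l' h
    rcases h.lt_or_eq with h | h
    · exact (hg_mono h).le
    · rw [h]
  -- g(2^l) → ∞
  have hg_top : Filter.Tendsto (fun l : ℕ => g ((2:ℝ)^l)) Filter.atTop Filter.atTop := by
    simp_rw [hgl]
    apply hv_top.comp
    apply tendsto_nhdsWithin_of_tendsto_nhds_of_eventually_within
    · have h2 : Filter.Tendsto (fun l : ℕ => ((2:ℝ)^l)⁻¹) Filter.atTop (nhds 0) := by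
        apply tendsto_inv_atTop_zero.comp
        exact tendsto_pow_atTop_atTop_of_one_lt (by norm_num)
      have := h2.const_sub 1
      simpa using this
    · filter_upwards with l
      exact (hmem l).2
  -- the defining set is nonempty
  have hSne : ∀ k : ℕ, {l : ℕ | A * g ((2:ℝ) ^ (b k)) < g ((2:ℝ) ^ l)}.Nonempty := by
    intro k
    exact (hg_top.eventually_gt_atTop _).exists
  have hb_mem : ∀ k : ℕ, A * g ((2:ℝ) ^ (b k)) < g ((2:ℝ) ^ (b (k+1))) := by
    intro k
    have := Nat.sInf_mem (hSne k)
    rwa [← hbrec k] at this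
  have hb_min : ∀ k m : ℕ, m < b (k+1) → g ((2:ℝ)^m) ≤ A * g ((2:ℝ)^(b k)) := by
    intro k m hm
    rw [hbrec k] at hm
    have := Nat.notMem_of_lt_sInf hm
    simpa using this
  have hb_mono : StrictMono b := by
    apply strictMono_nat_of_lt_succ
    intro k
    by_contra h
    push_neg at h
    have h1 : g ((2:ℝ)^(b (k+1))) ≤ g ((2:ℝ)^(b k)) := hg_le h
    have h2 : g ((2:ℝ)^(b k)) < A * g ((2:ℝ)^(b k)) := by
      nlinarith [hg_pos (b k)]
    linarith [hb_mem k]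
  have hb_ge1 : ∀ k, 1 ≤ b k := by
    intro k
    rw [← hb0]
    exact hb_mono.monotone (Nat.zero_le k)
  have hb_ge : ∀ k, k ≤ b k := fun k => (hb_mono.le_apply)
  -- doubling in terms of g
  have hgdbl : ∀ l : ℕ, 1 ≤ l → g ((2:ℝ)^l) ≤ D * g ((2:ℝ)^(l-1)) := by
    intro l hl
    rw [hgl, hgl]
    have hd : ((2:ℝ)^l)⁻¹ ∈ Set.Ioc (0:ℝ) (1/2) := by
      constructor
      · positivity
      · rw [inv_le_comm₀ (by positivity) (by norm_num)]
        norm_num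
        calc (2:ℝ) = 2^1 := (pow_one 2).symm
          _ ≤ 2^l := pow_le_pow_right₀ (by norm_num) hl
    have := hdbl _ hd
    obtain ⟨m, rfl⟩ : ∃ m, l = m + 1 := ⟨l-1, (Nat.succ_pred_eq_of_pos hl).symm⟩
    have h2 : 2 * ((2:ℝ)^(m+1))⁻¹ = ((2:ℝ)^(m+1-1))⁻¹ := by
      rw [pow_succ]
      simp
    rw [← h2]
    exact this
  have hgD : ∀ l : ℕ, g ((2:ℝ)^l) ≤ D^l := by
    intro l
    induction l with
    | zero => simpa using (hgl 0 ▸ (by norm_num [hv_zero] : v (1 - ((2:ℝ)^(0:ℕ))⁻¹) = 1)).le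
    | succ m ih =>
      have h1 := hgdbl (m+1) (by omega)
      simp only [Nat.add_sub_cancel] at h1
      calc g ((2:ℝ)^(m+1)) ≤ D * g ((2:ℝ)^m) := h1
        _ ≤ D * D^m := mul_le_mul_of_nonneg_left ih (by linarith)
        _ = D^(m+1) := by ring
  have hApos : (0:ℝ) < A := by linarith
  have hDpos : (0:ℝ) < D := by linarith
  have main : ∀ r ∈ Set.Ico (1/2 : ℝ) 1,
      (Real.pi * (v r) ^ 2 / (16 * A ^ 2 * D ^ 2) ≤
        ∫ φ in (0:ℝ)..(2 * Real.pi),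
          (u ((r : ℂ) * Complex.exp (Complex.I * (φ : ℂ)))) ^ 2) ∧
      (Real.pi / (4 * A * D) * v r ≤
        ∫ φ in (0:ℝ)..(2 * Real.pi),
          |u ((r : ℂ) * Complex.exp (Complex.I * (φ : ℂ)))|) := by
    rintro r ⟨hr2, hr1⟩
    have hr0 : (0:ℝ) ≤ r := by linarith
    have hε : (0:ℝ) < 1 - r := by linarith
    -- choose K with 2^(b K) ≤ 1/(1-r) < 2^(b (K+1))
    have hex : ∃ k : ℕ, ¬((2:ℝ)^(b k) ≤ 1/(1-r)) := by
      obtain ⟨k, hk⟩ := pow_unbounded_of_one_lt (1/(1-r)) (one_lt_two (α := ℝ))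
      refine ⟨k, by push_neg; exact lt_of_lt_of_le hk (pow_le_pow_right₀ one_le_two (hb_ge k))⟩
    classical
    obtain ⟨K, hKm⟩ : ∃ K, Nat.find hex = K + 1 := by
      refine ⟨Nat.find hex - 1, ?_⟩
      have h0 : (2:ℝ)^(b 0) ≤ 1/(1-r) := by
        rw [hb0, pow_one, le_div_iff₀ hε]; linarith
      have hne : Nat.find hex ≠ 0 := by
        intro h
        apply Nat.find_spec hex
        rw [h]
        exact h0
      omega
    have hK1 : (2:ℝ)^(b K) ≤ 1/(1-r) := by
      by_contra h
      exact Nat.find_min hex (by omega : K < Nat.find hex) h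
    have hK2 : 1/(1-r) < (2:ℝ)^(b (K+1)) := by
      have := Nat.find_spec hex
      rw [hKm] at this
      push_neg at this
      exact this
    -- estimate 1 : v r ≤ A * D * g(2^(b K))
    have hE1 : v r ≤ A * D * g ((2:ℝ)^(b K)) := by
      have h1 : v r ≤ g ((2:ℝ)^(b (K+1))) := by
        rw [hgl]
        have hlt : r < 1 - ((2:ℝ)^(b (K+1)))⁻¹ := by
          have : ((2:ℝ)^(b (K+1)))⁻¹ < 1 - r := by
            rw [inv_lt_comm₀ (by positivity) hε]
            rw [one_div] at hK2
            exact hK2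
          linarith
        exact (hv_mono ⟨hr0, hr1⟩ (hmem _) hlt).le
      have h2 : g ((2:ℝ)^(b (K+1))) ≤ D * g ((2:ℝ)^(b (K+1) - 1)) := hgdbl _ (hb_ge1 _)
      have h3 : g ((2:ℝ)^(b (K+1) - 1)) ≤ A * g ((2:ℝ)^(b K)) := by
        apply hb_min K
        have := hb_ge1 (K+1)
        omega
      calc v r ≤ g ((2:ℝ)^(b (K+1))) := h1
        _ ≤ D * g ((2:ℝ)^(b (K+1) - 1)) := h2
        _ ≤ D * (A * g ((2:ℝ)^(b K))) := mul_le_mul_of_nonneg_left h3 (by linarith)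
        _ = A * D * g ((2:ℝ)^(b K)) := by ring
    -- estimate 2 : 1/4 ≤ r ^ (2^(b K))
    have hE2 : (1/4 : ℝ) ≤ r ^ (2^(b K) : ℕ) := by
      apply aux_pow_quarter hr2 hr1
      calc ((2^(b K) : ℕ) : ℝ) = (2:ℝ)^(b K) := by push_cast; ring
        _ ≤ 1/(1-r) := hK1
    -- summability
    have hW : Summable (fun l : ℕ => D^l * r^(2^l : ℕ)) := by
      apply summable_of_ratio_norm_eventually_le (r := 1/2) (by norm_num)
      have hr2l : Filter.Tendsto (fun l : ℕ => D * r^(2^l : ℕ)) Filter.atTop (nhds 0) := by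
        have h1 : Filter.Tendsto (fun l : ℕ => r^(2^l : ℕ)) Filter.atTop (nhds 0) := by
          apply (tendsto_pow_atTop_nhds_zero_of_lt_one hr0 hr1).comp
          exact tendsto_pow_atTop_atTop_of_one_lt (by norm_num)
        have := h1.const_mul D
        simpa using this
      filter_upwards [hr2l.eventually_lt_const (by norm_num : (0:ℝ) < 1/2)] with l hl
      have hsplit : D^(l+1) * r^(2^(l+1) : ℕ) = (D * r^(2^l : ℕ)) * (D^l * r^(2^l : ℕ)) := by
        rw [pow_succ 2 l, pow_mul]
        ring
      rw [Real.norm_eq_abs, Real.norm_eq_abs, hsplit,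
        abs_of_nonneg (by positivity), abs_of_nonneg (by positivity)]
      apply mul_le_mul_of_nonneg_right hl.le (by positivity)
    have hM : Summable (fun k : ℕ => g ((2:ℝ)^(b k)) * r^(2^(b k) : ℕ)) := by
      apply Summable.of_nonneg_of_le
        (fun k => mul_nonneg (hg_pos (b k)).le (by positivity))
        (fun k => mul_le_mul_of_nonneg_right (hgD (b k)) (by positivity))
      exact hW.comp_injective hb_mono.injective
    -- the function U
    set U : ℝ → ℝ := fun φ => ∑' k : ℕ,
      g ((2:ℝ)^(b k)) * r^(2^(b k) : ℕ) * Real.cos (((2^(b k) : ℕ) : ℝ) * φ) with hUdef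
    have hUeq : ∀ φ : ℝ, u ((r:ℂ) * Complex.exp (Complex.I * (φ:ℂ))) = U φ := by
      intro φ
      have hzabs : ‖(r:ℂ) * Complex.exp (Complex.I * (φ:ℂ))‖ = r := by
        rw [norm_mul, Complex.norm_exp]
        simp [abs_of_nonneg hr0]
      have hz : (r:ℂ) * Complex.exp (Complex.I * (φ:ℂ)) ∈ Metric.ball (0:ℂ) 1 := by
        rw [Metric.mem_ball, dist_zero_right, hzabs]
        exact hr1
      rw [hu _ hz]
      have hterm : ∀ k : ℕ, (g ((2:ℝ)^(b k)) : ℂ) * ((r:ℂ) * Complex.exp (Complex.I * (φ:ℂ)))^(2^(b k) : ℕ)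
          = ((g ((2:ℝ)^(b k)) * r^(2^(b k) : ℕ) : ℝ) : ℂ)
            * Complex.exp ((((2^(b k) : ℕ) : ℝ) * φ : ℝ) * Complex.I) := by
        intro k
        rw [mul_pow, ← Complex.exp_nat_mul]
        push_cast
        ring_nf
      have hsummC : Summable (fun k : ℕ =>
          (g ((2:ℝ)^(b k)) : ℂ) * ((r:ℂ) * Complex.exp (Complex.I * (φ:ℂ)))^(2^(b k) : ℕ)) := by
        apply Summable.of_norm
        apply Summable.of_nonneg_of_le (fun k => norm_nonneg _) (fun k => ?_) hM
        rw [norm_mul, norm_pow, hzabs]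
        rw [Complex.norm_real, Real.norm_eq_abs, abs_of_nonneg (hg_pos (b k)).le]
      rw [Complex.re_tsum hsummC]
      apply tsum_congr
      intro k
      rw [hterm k, Complex.re_ofReal_mul, Complex.exp_ofReal_mul_I_re]
    -- continuity of U
    have hUcont : Continuous U := by
      apply continuous_tsum (f := fun (k:ℕ) (φ:ℝ) =>
        g ((2:ℝ)^(b k)) * r^(2^(b k) : ℕ) * Real.cos (((2^(b k) : ℕ) : ℝ) * φ))
        (fun k => continuous_const.mul (Real.continuous_cos.comp (continuous_const.mul continuous_id))) hM
      intro k φ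
      rw [Real.norm_eq_abs, abs_mul]
      calc |g ((2:ℝ)^(b k)) * r^(2^(b k) : ℕ)| * |Real.cos (((2^(b k) : ℕ) : ℝ) * φ)|
          ≤ |g ((2:ℝ)^(b k)) * r^(2^(b k) : ℕ)| * 1 :=
            mul_le_mul_of_nonneg_left (Real.abs_cos_le_one _) (abs_nonneg _)
        _ = g ((2:ℝ)^(b k)) * r^(2^(b k) : ℕ) := by
            rw [mul_one, abs_of_nonneg (mul_nonneg (hg_pos (b k)).le (by positivity))]
    -- orthogonality computation
    have h2pi : (0:ℝ) ≤ 2*Real.pi := by positivity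
    set nK : ℕ := 2^(b K) with hnKdef
    set E : ℕ → ℝ := fun k => g ((2:ℝ)^(b k)) * r^(2^(b k):ℕ) with hEdef
    set F : ℕ → ℝ → ℝ := fun k φ =>
      (E k * Real.cos (((2^(b k):ℕ):ℝ)*φ)) * Real.cos ((nK:ℝ)*φ) with hFdef
    have hEpos : ∀ k, 0 < E k := fun k => mul_pos (hg_pos (b k)) (by positivity)
    have hcosK : Continuous (fun φ : ℝ => Real.cos ((nK:ℝ)*φ)) :=
      Real.continuous_cos.comp (continuous_const.mul continuous_id)
    have hFcont : ∀ k:ℕ, Continuous (F k) := fun k =>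
      (continuous_const.mul (Real.continuous_cos.comp (continuous_const.mul continuous_id))).mul hcosK
    have hFbound : ∀ k (φ:ℝ), ‖F k φ‖ ≤ E k := by
      intro k φ
      rw [hFdef, Real.norm_eq_abs, abs_mul, abs_mul, abs_of_nonneg (hEpos k).le]
      calc E k * |Real.cos (((2^(b k):ℕ):ℝ)*φ)| * |Real.cos ((nK:ℝ)*φ)|
          ≤ E k * 1 * 1 := by
            apply mul_le_mul (mul_le_mul le_rfl (Real.abs_cos_le_one _) (abs_nonneg _) (hEpos k).le)
              (Real.abs_cos_le_one _) (abs_nonneg _)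
            exact mul_nonneg (hEpos k).le zero_le_one
        _ = E k := by ring
    have hterm_int : ∀ k : ℕ, ∫ φ in (0:ℝ)..(2*Real.pi), F k φ
        = if (2^(b k):ℕ) = nK then Real.pi * E k else 0 := by
      intro k
      have hps : ∀ φ:ℝ, F k φ
          = E k * (Real.cos (((2^(b k):ℕ):ℝ)*φ) * Real.cos ((nK:ℝ)*φ)) := fun φ => by
        rw [hFdef]; ring
      simp_rw [hps]
      rw [intervalIntegral.integral_const_mul,
        aux_orth _ _ (Nat.two_pow_pos (b k)).ne' (Nat.two_pow_pos (b K)).ne']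
      split_ifs with h
      · ring
      · ring
    have hJ : ∫ φ in (0:ℝ)..(2*Real.pi), U φ * Real.cos ((nK:ℝ)*φ) = Real.pi * E K := by
      have h1 : ∀ φ:ℝ, U φ * Real.cos ((nK:ℝ)*φ) = ∑' k:ℕ, F k φ := by
        intro φ
        rw [hUdef, hFdef]
        exact (tsum_mul_right).symm
      have hint : ∀ k:ℕ, MeasureTheory.Integrable (F k)
          (MeasureTheory.volume.restrict (Set.Ioc (0:ℝ) (2*Real.pi))) := fun k =>
        (hFcont k).integrableOn_Ioc
      have hμuniv : (MeasureTheory.volume.restrict (Set.Ioc (0:ℝ) (2*Real.pi))) Set.univ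
          = ENNReal.ofReal (2*Real.pi) := by
        rw [MeasureTheory.Measure.restrict_apply_univ, Real.volume_Ioc, sub_zero]
      have hnorm : Summable (fun k => ∫ φ, ‖F k φ‖
          ∂(MeasureTheory.volume.restrict (Set.Ioc (0:ℝ) (2*Real.pi)))) := by
        apply Summable.of_nonneg_of_le
          (fun k => MeasureTheory.integral_nonneg (fun a => norm_nonneg _))
          (fun k => ?_) (hM.mul_left (2*Real.pi))
        calc ∫ φ, ‖F k φ‖ ∂(MeasureTheory.volume.restrict (Set.Ioc (0:ℝ) (2*Real.pi)))
            ≤ ∫ _, E k ∂(MeasureTheory.volume.restrict (Set.Ioc (0:ℝ) (2*Real.pi))) := by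
              apply MeasureTheory.integral_mono ((hFcont k).norm.integrableOn_Ioc)
                (MeasureTheory.integrable_const _) (fun φ => hFbound k φ)
          _ = 2*Real.pi * (g ((2:ℝ)^(b k)) * r^(2^(b k):ℕ)) := by
              rw [MeasureTheory.integral_const, MeasureTheory.measureReal_def, hμuniv, smul_eq_mul,
                ENNReal.toReal_ofReal h2pi, hEdef]
      calc ∫ φ in (0:ℝ)..(2*Real.pi), U φ * Real.cos ((nK:ℝ)*φ)
          = ∫ φ in (0:ℝ)..(2*Real.pi), ∑' k:ℕ, F k φ := by simp_rw [h1]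
        _ = ∫ φ in Set.Ioc (0:ℝ) (2*Real.pi), ∑' k:ℕ, F k φ := intervalIntegral.integral_of_le h2pi
        _ = ∑' k:ℕ, ∫ φ in Set.Ioc (0:ℝ) (2*Real.pi), F k φ :=
            (MeasureTheory.integral_tsum_of_summable_integral_norm hint hnorm).symm
        _ = ∑' k:ℕ, ∫ φ in (0:ℝ)..(2*Real.pi), F k φ := by
            refine tsum_congr (fun k => ?_)
            rw [intervalIntegral.integral_of_le h2pi]
        _ = ∑' k:ℕ, (if (2^(b k):ℕ) = nK then Real.pi * E k else 0) := tsum_congr hterm_int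
        _ = Real.pi * E K := by
            rw [tsum_eq_single K]
            · rw [if_pos rfl]
            · intro k hk
              rw [if_neg]
              intro h
              exact hk (hb_mono.injective (Nat.pow_right_injective le_rfl h))
    -- integrability facts
    have hUint : IntervalIntegrable U MeasureTheory.volume 0 (2*Real.pi) :=
      hUcont.intervalIntegrable _ _
    have hUcosint : IntervalIntegrable (fun φ => U φ * Real.cos ((nK:ℝ)*φ))
        MeasureTheory.volume 0 (2*Real.pi) := (hUcont.mul hcosK).intervalIntegrable _ _
    have hU2int : IntervalIntegrable (fun φ => (U φ)^2) MeasureTheory.volume 0 (2*Real.pi) :=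
      ((hUcont.pow 2).intervalIntegrable _ _)
    have hc2int : IntervalIntegrable (fun φ => Real.cos ((nK:ℝ)*φ) * Real.cos ((nK:ℝ)*φ))
        MeasureTheory.volume 0 (2*Real.pi) := (hcosK.mul hcosK).intervalIntegrable _ _
    have hIc2 : ∫ φ in (0:ℝ)..(2*Real.pi), Real.cos ((nK:ℝ)*φ) * Real.cos ((nK:ℝ)*φ) = Real.pi := by
      have := aux_orth nK nK (Nat.two_pow_pos (b K)).ne' (Nat.two_pow_pos (b K)).ne'
      rw [if_pos rfl] at this
      exact this
    set t : ℝ := E K with htdef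
    have htpos : 0 < t := hEpos K
    have hvr_pos : 0 < v r := hv_pos r ⟨hr0, hr1⟩
    have htv : v r ≤ 4 * A * D * t := by
      have h4t : g ((2:ℝ)^(b K)) ≤ 4 * t := by
        have h := mul_le_mul_of_nonneg_left hE2 (hg_pos (b K)).le
        have ht' : t = g ((2:ℝ)^(b K)) * r ^ (nK:ℕ) := rfl
        rw [ht']
        linarith [h]
      nlinarith [hE1, hg_pos (b K), mul_pos hApos hDpos]
    -- Cauchy-Schwarz via nonnegativity of a square
    have hsq : (0:ℝ) ≤ ∫ φ in (0:ℝ)..(2*Real.pi), (U φ - t * Real.cos ((nK:ℝ)*φ))^2 :=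
      intervalIntegral.integral_nonneg h2pi (fun φ _ => sq_nonneg _)
    have hexp : (fun φ => (U φ - t * Real.cos ((nK:ℝ)*φ))^2)
        = fun φ => ((U φ)^2 - 2*t*(U φ * Real.cos ((nK:ℝ)*φ)))
            + t^2*(Real.cos ((nK:ℝ)*φ) * Real.cos ((nK:ℝ)*φ)) := funext fun φ => by ring
    rw [hexp, intervalIntegral.integral_add (hU2int.sub (hUcosint.const_mul _))
        (hc2int.const_mul _), intervalIntegral.integral_sub hU2int (hUcosint.const_mul _),
      intervalIntegral.integral_const_mul, intervalIntegral.integral_const_mul, hJ, hIc2] at hsq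
    have hI2 : Real.pi * t^2 ≤ ∫ φ in (0:ℝ)..(2*Real.pi), (U φ)^2 := by nlinarith [hsq]
    constructor
    · -- part 1
      have hrw : (∫ φ in (0:ℝ)..(2*Real.pi), (u ((r : ℂ) * Complex.exp (Complex.I * (φ : ℂ))))^2)
          = ∫ φ in (0:ℝ)..(2*Real.pi), (U φ)^2 :=
        intervalIntegral.integral_congr (fun φ _ => by rw [hUeq φ])
      rw [hrw]
      refine le_trans ?_ hI2
      have hv2 : (v r)^2 ≤ 16*A^2*D^2*t^2 := by nlinarith [htv, hvr_pos, htpos]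
      rw [div_le_iff₀ (by nlinarith [hApos, hDpos] : (0:ℝ) < 16 * A^2 * D^2)]
      nlinarith [Real.pi_pos, hv2]
    · -- part 2
      have hrw : (∫ φ in (0:ℝ)..(2*Real.pi), |u ((r : ℂ) * Complex.exp (Complex.I * (φ : ℂ)))|)
          = ∫ φ in (0:ℝ)..(2*Real.pi), |U φ| :=
        intervalIntegral.integral_congr (fun φ _ => by rw [hUeq φ])
      rw [hrw]
      have habs : (∫ φ in (0:ℝ)..(2*Real.pi), U φ * Real.cos ((nK:ℝ)*φ))
          ≤ ∫ φ in (0:ℝ)..(2*Real.pi), |U φ| := by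
        apply intervalIntegral.integral_mono_on h2pi hUcosint
          (hUcont.abs.intervalIntegrable _ _)
        intro φ _
        calc U φ * Real.cos ((nK:ℝ)*φ) ≤ |U φ * Real.cos ((nK:ℝ)*φ)| := le_abs_self _
          _ = |U φ| * |Real.cos ((nK:ℝ)*φ)| := abs_mul _ _
          _ ≤ |U φ| * 1 := mul_le_mul_of_nonneg_left (Real.abs_cos_le_one _) (abs_nonneg _)
          _ = |U φ| := mul_one _
      rw [hJ] at habs
      refine le_trans ?_ habs
      rw [div_mul_eq_mul_div, div_le_iff₀ (by nlinarith [hApos, hDpos] : (0:ℝ) < 4 * A * D)]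
      nlinarith [Real.pi_pos]
  refine ⟨fun r hr => (main r hr).1,
    ⟨Real.pi/(4*A*D), div_pos Real.pi_pos (by nlinarith : (0:ℝ) < 4*A*D), fun r hr => (main r hr).2⟩⟩
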